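/- Let n ∈ ℕ, n ≥ 1, and let A be the weighted Neumann graph Laplacian on {0,…,n−1}³ defined in the context. For every m ∈ {0,1,…,n−1}³, the function φ_m(k) = ∏_{i=1}^3 cos(π m_i (k_i + 1/2) / n) satisfies A φ_m = λ_m φ_m, where λ_m = (1/8) [ Σ_{i=1}^3 (1 − cos(π m_i / n)) + Σ_{1 ≤ i < j ≤ 3} (1 − cos(π m_i / n) cos(π m_j / n)) + (1 − ∏_{i=1}^3 cos(π m_i / n)) ]. -/

import Mathlib

open Real

/-- Coordinatewise reflection: maps `−1` to `0`, `n` to `n−1`, and fixes everything else. -/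
def reflect (n : ℕ) (z : ℤ) : ℤ :=
  if z = -1 then 0 else if z = (n : ℤ) then (n : ℤ) - 1 else z

/-- The weighted Neumann graph Laplacian on `{0,…,n−1}³`:
`(A f)(k) = (1/16) Σ_{ε ∈ {−1,0,1}³, ε ≠ 0} 2^{1−|ε|₁} (f(k) − f(ρ(k+ε)))`. -/
noncomputable def graphLap (n : ℕ) (f : (Fin 3 → ℤ) → ℝ) (k : Fin 3 → ℤ) : ℝ :=
  (1 / 16) * ∑ ε ∈ (Finset.Icc (fun _ => (-1 : ℤ)) (fun _ => (1 : ℤ))).erase 0,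
    (2 : ℝ) ^ ((1 : ℤ) - ∑ i, |ε i|) * (f k - f (fun i => reflect n (k i + ε i)))

/-- Eigenvectors of the weighted Neumann graph Laplacian: `A φ_m = λ_m φ_m` with
`φ_m(k) = ∏_i cos(π m_i (k_i + 1/2)/n)`. -/
theorem graphLap_eigen (n : ℕ) (hn : 1 ≤ n) (m : Fin 3 → ℕ) (hm : ∀ i, m i < n)
    (k : Fin 3 → ℤ) (hk : ∀ i, 0 ≤ k i ∧ k i ≤ (n : ℤ) - 1) :
    graphLap n (fun j => ∏ i, Real.cos (π * (m i) * ((j i : ℝ) + 1 / 2) / n)) k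
      = (1 / 8) * ((∑ i, (1 - Real.cos (π * (m i) / n))) +
          (∑ p ∈ Finset.univ.filter (fun p : Fin 3 × Fin 3 => p.1 < p.2),
            (1 - Real.cos (π * (m p.1) / n) * Real.cos (π * (m p.2) / n))) +
          (1 - ∏ i, Real.cos (π * (m i) / n))) *
        ∏ i, Real.cos (π * (m i) * ((k i : ℝ) + 1 / 2) / n) := by
  have hn0 : (n:ℝ) ≠ 0 := Nat.cast_ne_zero.2 (by omega)
  -- reflection invariance of the coordinate cosine
  have hrefl : ∀ (i : Fin 3) (e : ℤ),
      Real.cos (π * (m i) * (((reflect n (k i + e) : ℤ) : ℝ) + 1/2) / n)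
        = Real.cos (π * (m i) * (((k i + e : ℤ) : ℝ) + 1/2) / n) := by
    intro i e
    unfold reflect
    split_ifs with h1 h2
    · rw [h1]
      have : π * (m i) * (((-1:ℤ):ℝ) + 1/2) / n = -(π * (m i) * (((0:ℤ):ℝ) + 1/2) / n) := by
        push_cast; ring
      rw [this, Real.cos_neg]
    · rw [h2]
      have ha : π * (m i) * ((((n:ℤ) - 1 :ℤ):ℝ) + 1/2) / n
          = ((m i):ℝ) * π - π * (m i) / (2*n) := by push_cast; field_simp; ring
      have hb : π * (m i) * ((((n:ℕ):ℤ):ℝ) + 1/2) / n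
          = ((m i):ℝ) * π + π * (m i) / (2*n) := by push_cast; field_simp
      rw [ha, hb, Real.cos_add, Real.cos_sub, Real.sin_nat_mul_pi]
      ring
    · rfl
  -- per-coordinate cosine sum
  have hkey : ∀ i : Fin 3,
      ∑ e ∈ Finset.Icc (-1:ℤ) 1, (2:ℝ)^(-|e|) * Real.cos (π * (m i) * (((k i + e : ℤ):ℝ) + 1/2) / n)
        = (1 + Real.cos (π * (m i) / n)) * Real.cos (π * (m i) * (((k i):ℝ) + 1/2) / n) := by
    intro i
    have hs : Finset.Icc (-1:ℤ) 1 = {-1, 0, 1} := by decide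
    rw [hs, Finset.sum_insert (by decide), Finset.sum_insert (by decide), Finset.sum_singleton]
    have h1 : π * (m i) * (((k i + -1 : ℤ):ℝ) + 1/2) / n
        = π * (m i) * (((k i):ℝ) + 1/2) / n - π * (m i) / n := by push_cast; field_simp; ring
    have h2 : π * (m i) * (((k i + 1 : ℤ):ℝ) + 1/2) / n
        = π * (m i) * (((k i):ℝ) + 1/2) / n + π * (m i) / n := by push_cast; field_simp; ring
    have h0 : π * (m i) * (((k i + 0 : ℤ):ℝ) + 1/2) / n
        = π * (m i) * (((k i):ℝ) + 1/2) / n := by push_cast; ring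
    rw [h1, h2, h0, Real.cos_sub, Real.cos_add]
    norm_num
    ring
  -- per-coordinate constant sum
  have hkey2 : ∀ i : Fin 3,
      ∑ e ∈ Finset.Icc (-1:ℤ) 1, (2:ℝ)^(-|e|) * Real.cos (π * (m i) * (((k i):ℝ) + 1/2) / n)
        = 2 * Real.cos (π * (m i) * (((k i):ℝ) + 1/2) / n) := by
    intro i
    rw [← Finset.sum_mul]
    have hs : Finset.Icc (-1:ℤ) 1 = {-1, 0, 1} := by decide
    rw [hs, Finset.sum_insert (by decide), Finset.sum_insert (by decide), Finset.sum_singleton]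
    norm_num
  unfold graphLap
  -- remove the ε = 0 term
  have hzero : (2:ℝ) ^ ((1 : ℤ) - ∑ i, |(0 : Fin 3 → ℤ) i|) *
      ((fun j => ∏ i, Real.cos (π * (m i) * ((j i : ℝ) + 1 / 2) / n)) k -
        (fun j => ∏ i, Real.cos (π * (m i) * ((j i : ℝ) + 1 / 2) / n))
          (fun i => reflect n (k i + (0 : Fin 3 → ℤ) i))) = 0 := by
    have : (fun i => reflect n (k i + (0 : Fin 3 → ℤ) i)) = k := by
      funext i
      have h := hk i
      simp only [Pi.zero_apply, add_zero]
      unfold reflect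
      rw [if_neg (by omega), if_neg (by omega)]
    rw [this]
    simp
  rw [Finset.sum_erase (a := (0 : Fin 3 → ℤ))
    (f := fun ε : Fin 3 → ℤ => (2:ℝ) ^ ((1 : ℤ) - ∑ i, |ε i|) *
      ((fun j => ∏ i, Real.cos (π * (m i) * ((j i : ℝ) + 1 / 2) / n)) k -
        (fun j => ∏ i, Real.cos (π * (m i) * ((j i : ℝ) + 1 / 2) / n))
          (fun i => reflect n (k i + ε i)))) _ hzero]
  -- rewrite each summand
  have hterm : ∀ ε ∈ Finset.Icc (fun _ : Fin 3 => (-1 : ℤ)) (fun _ => (1 : ℤ)),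
      (2:ℝ) ^ ((1 : ℤ) - ∑ i, |ε i|) *
        ((fun j => ∏ i, Real.cos (π * (m i) * ((j i : ℝ) + 1 / 2) / n)) k -
          (fun j => ∏ i, Real.cos (π * (m i) * ((j i : ℝ) + 1 / 2) / n))
            (fun i => reflect n (k i + ε i)))
      = 2 * (∏ i, ((2:ℝ)^(-|ε i|) * Real.cos (π * (m i) * (((k i):ℝ) + 1/2)/n)))
        - 2 * ∏ i, ((2:ℝ)^(-|ε i|) * Real.cos (π * (m i) * (((k i + ε i : ℤ):ℝ) + 1/2)/n)) := by
    intro ε _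
    simp only []
    rw [Finset.prod_congr rfl (fun i _ => hrefl i (ε i))]
    rw [Finset.prod_mul_distrib, Finset.prod_mul_distrib]
    have hw : (2:ℝ)^((1:ℤ) - ∑ i, |ε i|) = 2 * ∏ i, (2:ℝ)^(-|ε i|) := by
      rw [Fin.sum_univ_three, Fin.prod_univ_three,
        show (1:ℤ) - (|ε 0| + |ε 1| + |ε 2|) = 1 + -|ε 0| + -|ε 1| + -|ε 2| by ring,
        zpow_add₀ (two_ne_zero), zpow_add₀ (two_ne_zero), zpow_add₀ (two_ne_zero), zpow_one]
      ring
    rw [hw]; ring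
  have hA : (∑ ε ∈ Fintype.piFinset (fun _ : Fin 3 => Finset.Icc (-1:ℤ) 1),
      ∏ i, ((2:ℝ)^(-|ε i|) * Real.cos (π * (m i) * (((k i):ℝ) + 1/2)/n)))
    = ∏ i, ∑ e ∈ Finset.Icc (-1:ℤ) 1,
        ((2:ℝ)^(-|e|) * Real.cos (π * (m i) * (((k i):ℝ) + 1/2)/n)) :=
    (Finset.prod_univ_sum (fun _ : Fin 3 => Finset.Icc (-1:ℤ) 1)
      (fun i e => (2:ℝ)^(-|e|) * Real.cos (π * (m i) * (((k i):ℝ) + 1/2)/n))).symm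
  have hB : (∑ ε ∈ Fintype.piFinset (fun _ : Fin 3 => Finset.Icc (-1:ℤ) 1),
      ∏ i, ((2:ℝ)^(-|ε i|) * Real.cos (π * (m i) * (((k i + ε i : ℤ):ℝ) + 1/2)/n)))
    = ∏ i, ∑ e ∈ Finset.Icc (-1:ℤ) 1,
        ((2:ℝ)^(-|e|) * Real.cos (π * (m i) * (((k i + e : ℤ):ℝ) + 1/2)/n)) :=
    (Finset.prod_univ_sum (fun _ : Fin 3 => Finset.Icc (-1:ℤ) 1)
      (fun i e => (2:ℝ)^(-|e|) * Real.cos (π * (m i) * (((k i + e : ℤ):ℝ) + 1/2)/n))).symm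
  rw [Finset.sum_congr rfl hterm, Finset.sum_sub_distrib, ← Finset.mul_sum, ← Finset.mul_sum,
    Pi.Icc_eq, hA, hB]
  rw [Finset.prod_congr rfl (fun i _ => hkey2 i), Finset.prod_congr rfl (fun i _ => hkey i)]
  -- now pure algebra
  have hpair : Finset.univ.filter (fun p : Fin 3 × Fin 3 => p.1 < p.2)
      = {((0:Fin 3),(1:Fin 3)), (0,2), (1,2)} := by decide
  rw [hpair, Finset.sum_insert (by decide), Finset.sum_insert (by decide), Finset.sum_singleton,
    Fin.sum_univ_three, Fin.prod_univ_three, Fin.prod_univ_three, Fin.prod_univ_three,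
    Fin.prod_univ_three]
  ring
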